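/- Term Reducibility (call-by-value): for every closed λ-term M and every natural number n, the following are equivalent: (1) M reduces under weak call-by-value reduction in exactly n steps to a term N in →v-normal form; (2) ⟨M⟩ rewrites in exactly n steps in Φ to a Φ-term t in Φ-normal form with ⟦t⟧ = N. -/

import Mathlib

/-- Untyped λ-terms over variables drawn from ℕ (a denumerable totally ordered set). -/
inductive Lam : Type
  | var : ℕ → Lam
  | lam : ℕ → Lam → Lam
  | app : Lam → Lam → Lam
deriving DecidableEq, Repr

namespace Lam

/-- Capture-permitting substitution M{N/x} (adequate for weak reduction of closed terms). -/
def subst : Lam → ℕ → Lam → Lam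
  | var y, x, N => if y = x then N else var y
  | lam y M, x, N => if y = x then lam y M else lam y (subst M x N)
  | app M₁ M₂, x, N => app (subst M₁ x N) (subst M₂ x N)

/-- Simultaneous substitution along a partial assignment of terms to variables. -/
def msubst : Lam → (ℕ → Option Lam) → Lam
  | var y, σ => (σ y).getD (var y)
  | lam y M, σ => lam y (msubst M (fun z => if z = y then none else σ z))
  | app M₁ M₂, σ => app (msubst M₁ σ) (msubst M₂ σ)

/-- The assignment sending each `xᵢ` to `tᵢ` (first match wins). -/
def substOf (xs : List ℕ) (ts : List Lam) : ℕ → Option Lam :=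
  fun y => (xs.zip ts).lookup y

/-- Values: variables and abstractions. -/
def IsValue : Lam → Prop
  | var _ => True
  | lam _ _ => True
  | app _ _ => False

/-- Weak call-by-value reduction. -/
inductive CbvStep : Lam → Lam → Prop
  | beta {x : ℕ} {M V : Lam} : IsValue V → CbvStep (app (lam x M) V) (subst M x V)
  | appL {M N L : Lam} : CbvStep M N → CbvStep (app M L) (app N L)
  | appR {M N L : Lam} : CbvStep M N → CbvStep (app L M) (app L N)

/-- A →v-normal form. -/
def CbvNormal (M : Lam) : Prop := ¬ ∃ N, CbvStep M N

/-- Free variables, as a finite set. -/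
def fv : Lam → Finset ℕ
  | var x => {x}
  | lam x M => fv M \ {x}
  | app M N => fv M ∪ fv N

/-- The sequence (without repetitions, in variable order) of free variables of `M`. -/
def fvList (M : Lam) : List ℕ := (fv M).sort (· ≤ ·)

def Closed (M : Lam) : Prop := fv M = ∅

/-- The size |M| of a λ-term. -/
def size : Lam → ℕ
  | var _ => 1
  | lam _ M => size M + 1
  | app M N => size M + size N + 1

end Lam

/-- `NSteps r n a b`: `a` reduces to `b` in exactly `n` `r`-steps. -/
def NSteps {α : Type*} (r : α → α → Prop) : ℕ → α → α → Prop
  | 0 => fun a b => a = b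
  | n + 1 => fun a c => ∃ b, r a b ∧ NSteps r n b c

/-- Terms of the constructor rewrite system Φ: variables, the binary function symbol
`app`, and for every λ-term `M` and variable `x` a constructor `c_{x,M}` (here `con x M`),
whose arity is the length of `FV(λx.M)`. -/
inductive PTerm : Type
  | var : ℕ → PTerm
  | app : PTerm → PTerm → PTerm
  | con : ℕ → Lam → List PTerm → PTerm

namespace PTerm

/-- Well-formed Φ-terms: every constructor is applied to as many arguments as its arity. -/
inductive WF : PTerm → Prop
  | var {x} : WF (var x)
  | app {u v} : WF u → WF v → WF (app u v)
  | con {x M ts} : ts.length = (Lam.fvList (Lam.lam x M)).length →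
      (∀ t ∈ ts, WF t) → WF (con x M ts)

/-- Constructor terms: built only from constructors. -/
inductive IsConTerm : PTerm → Prop
  | con {x M ts} : (∀ t ∈ ts, IsConTerm t) → IsConTerm (con x M ts)

/-- Canonical closed Φ-terms. -/
inductive Canonical : PTerm → Prop
  | con {t} : IsConTerm t → Canonical t
  | app {u v} : Canonical u → Canonical v → Canonical (app u v)

/-- Closed Φ-terms contain no variables. -/
inductive ClosedP : PTerm → Prop
  | app {u v} : ClosedP u → ClosedP v → ClosedP (app u v)
  | con {x M ts} : (∀ t ∈ ts, ClosedP t) → ClosedP (con x M ts)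

/-- Substitution of Φ-terms for variables. -/
def psubst (σ : ℕ → Option PTerm) : PTerm → PTerm
  | var y => (σ y).getD (var y)
  | app u v => app (psubst σ u) (psubst σ v)
  | con x M ts => con x M (ts.attach.map (fun t => psubst σ t.1))
decreasing_by
  all_goals simp_wf
  all_goals try have := List.sizeOf_lt_of_mem t.2
  all_goals omega

/-- The assignment sending each `xᵢ` to `tᵢ`. -/
def substOfP (xs : List ℕ) (ts : List PTerm) : ℕ → Option PTerm :=
  fun y => (xs.zip ts).lookup y

/-- Variables occurring in a Φ-term. -/
def pvars : PTerm → List ℕ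
  | var y => [y]
  | app u v => pvars u ++ pvars v
  | con _ _ ts => ts.attach.flatMap (fun t => pvars t.1)
decreasing_by
  all_goals simp_wf
  all_goals try have := List.sizeOf_lt_of_mem t.2
  all_goals omega

end PTerm

/-- The translation ⟨·⟩ from λ-terms to Φ-terms. -/
def transPhi : Lam → PTerm
  | .var x => .var x
  | .lam x M => .con x M ((Lam.fvList (.lam x M)).map .var)
  | .app M N => .app (transPhi M) (transPhi N)

/-- The readback ⟦·⟧ from Φ-terms to λ-terms. -/
def readback : PTerm → Lam
  | .var x => .var x
  | .app u v => .app (readback u) (readback v)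
  | .con x M ts =>
      Lam.msubst (.lam x M)
        (Lam.substOf (Lam.fvList (.lam x M)) (ts.attach.map (fun t => readback t.1)))
decreasing_by
  all_goals simp_wf
  all_goals try have := List.sizeOf_lt_of_mem t.2
  all_goals omega

/-- One-step rewriting in Φ: the rule app(c_{x,M}(x₁,…,xₙ), x) → ⟨M⟩ (matched variables
instantiated by constructor terms), closed under arbitrary contexts. -/
inductive PhiStep : PTerm → PTerm → Prop
  | root {x : ℕ} {M : Lam} {ts : List PTerm} {v : PTerm} :
      (∀ t ∈ ts, PTerm.IsConTerm t) → PTerm.IsConTerm v →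
      ts.length = (Lam.fvList (.lam x M)).length →
      PhiStep (.app (.con x M ts) v)
        (PTerm.psubst (PTerm.substOfP (Lam.fvList (.lam x M) ++ [x]) (ts ++ [v])) (transPhi M))
  | appL {u u' v} : PhiStep u u' → PhiStep (.app u v) (.app u' v)
  | appR {u v v'} : PhiStep v v' → PhiStep (.app u v) (.app u v')
  | conArg {x M ts₁ t t' ts₂} : PhiStep t t' →
      PhiStep (.con x M (ts₁ ++ t :: ts₂)) (.con x M (ts₁ ++ t' :: ts₂))

/-- Φ-normal forms. -/
def PhiNormal (t : PTerm) : Prop := ¬ ∃ u, PhiStep t u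

section Aux
open Lam PTerm

/-! ### List lookup lemmas -/

lemma lookup_cons'' {β : Type*} (y k : ℕ) (b : β) (l : List (ℕ × β)) :
    List.lookup y ((k, b) :: l) = if y = k then some b else List.lookup y l := by
  by_cases h : y = k
  · simp [List.lookup, h]
  · have hb : (y == k) = false := by simp [h]
    simp [List.lookup, hb, h]

lemma lookup_zip_map {β γ : Type*} (f : β → γ) (y : ℕ) :
    ∀ (xs : List ℕ) (us : List β),
      (xs.zip (us.map f)).lookup y = ((xs.zip us).lookup y).map f
  | [], _ => by simp
  | _ :: _, [] => by simp
  | x :: xs, u :: us => by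
    by_cases h : y = x <;> simp [lookup_cons'', h, lookup_zip_map f y xs us]

lemma lookup_zip_not_mem {β : Type*} {y : ℕ} :
    ∀ {xs : List ℕ} (us : List β), y ∉ xs → (xs.zip us).lookup y = none
  | [], _, _ => by simp
  | _ :: _, [], _ => by simp
  | x :: xs, u :: us, h => by
    simp only [List.mem_cons, not_or] at h
    simp [lookup_cons'', h.1, lookup_zip_not_mem us h.2]

lemma lookup_zip_mem {β : Type*} {y : ℕ} :
    ∀ {xs : List ℕ} {us : List β}, y ∈ xs → xs.length = us.length →
      ∃ u ∈ us, (xs.zip us).lookup y = some u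
  | [], _, h, _ => by simp at h
  | _ :: _, [], _, hl => by simp at hl
  | x :: xs, u :: us, h, hl => by
    by_cases hyx : y = x
    · exact ⟨u, by simp, by simp [lookup_cons'', hyx]⟩
    · simp only [List.mem_cons, hyx, false_or] at h
      obtain ⟨u', hu', hl'⟩ := lookup_zip_mem h (by simpa using hl)
      exact ⟨u', by simp [hu'], by simp [lookup_cons'', hyx, hl']⟩

lemma lookup_zip_some_mem {β : Type*} {y : ℕ} {u : β} :
    ∀ {xs : List ℕ} {us : List β}, (xs.zip us).lookup y = some u → u ∈ us
  | [], _, h => by simp at h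
  | _ :: _, [], h => by simp at h
  | x :: xs, u' :: us, h => by
    by_cases hyx : y = x
    · simp [lookup_cons'', hyx] at h; simp [h]
    · simp only [List.zip_cons_cons, lookup_cons'', hyx, if_false] at h
      exact List.mem_cons_of_mem _ (lookup_zip_some_mem h)

lemma lookup_zip_append_mem {β : Type*} {y : ℕ} :
    ∀ {xs : List ℕ} {us : List β} (xs' : List ℕ) (us' : List β),
      xs.length = us.length → y ∈ xs →
      ((xs ++ xs').zip (us ++ us')).lookup y = (xs.zip us).lookup y
  | [], _, _, _, _, h => by simp at h
  | _ :: _, [], _, _, hl, _ => by simp at hl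
  | x :: xs, u :: us, xs', us', hl, h => by
    by_cases hyx : y = x
    · simp [lookup_cons'', hyx]
    · simp only [List.mem_cons, hyx, false_or] at h
      simp [lookup_cons'', hyx,
        lookup_zip_append_mem xs' us' (by simpa using hl) h]

lemma lookup_zip_append_not_mem {β : Type*} {y : ℕ} :
    ∀ {xs : List ℕ} {us : List β} (xs' : List ℕ) (us' : List β),
      xs.length = us.length → y ∉ xs →
      ((xs ++ xs').zip (us ++ us')).lookup y = (xs'.zip us').lookup y
  | [], [], _, _, _, _ => by simp
  | [], _ :: _, _, _, hl, _ => by simp at hl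
  | _ :: _, [], _, _, hl, _ => by simp at hl
  | x :: xs, u :: us, xs', us', hl, h => by
    simp only [List.mem_cons, not_or] at h
    simp [lookup_cons'', h.1,
      lookup_zip_append_not_mem xs' us' (by simpa using hl) h.2]

lemma lookup_zip_self {β : Type*} (g : ℕ → β) {y : ℕ} :
    ∀ {xs : List ℕ}, y ∈ xs → (xs.zip (xs.map g)).lookup y = some (g y)
  | [], h => by simp at h
  | x :: xs, h => by
    by_cases hyx : y = x
    · simp [lookup_cons'', hyx]
    · simp only [List.mem_cons, hyx, false_or] at h
      simp [lookup_cons'', hyx, lookup_zip_self g h]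

/-! ### Lam lemmas -/

lemma Lam.msubst_congr : ∀ (M : Lam) {σ₁ σ₂ : ℕ → Option Lam},
    (∀ y ∈ fv M, (σ₁ y).getD (.var y) = (σ₂ y).getD (.var y)) →
    msubst M σ₁ = msubst M σ₂
  | .var y, σ₁, σ₂, h => by simpa [msubst, fv] using h y (by simp [fv])
  | .lam y M, σ₁, σ₂, h => by
    simp only [msubst, Lam.lam.injEq, true_and]
    refine Lam.msubst_congr M (fun z hz => ?_)
    by_cases hzy : z = y
    · simp [hzy]
    · simpa [hzy] using h z (by simp [fv, hz, hzy])
  | .app M₁ M₂, σ₁, σ₂, h => by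
    simp only [msubst, Lam.app.injEq]
    exact ⟨Lam.msubst_congr M₁ (fun z hz => h z (by simp [fv, hz])),
      Lam.msubst_congr M₂ (fun z hz => h z (by simp [fv, hz]))⟩

lemma Lam.msubst_triv : ∀ (M : Lam) {σ : ℕ → Option Lam},
    (∀ y ∈ fv M, σ y = none) → msubst M σ = M
  | .var y, σ, h => by simp [msubst, h y (by simp [fv])]
  | .lam y M, σ, h => by
    simp only [msubst, Lam.lam.injEq, true_and]
    refine Lam.msubst_triv M (fun z hz => ?_)
    by_cases hzy : z = y
    · simp [hzy]
    · simpa [hzy] using h z (by simp [fv, hz, hzy])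
  | .app M₁ M₂, σ, h => by
    simp only [msubst, Lam.app.injEq]
    exact ⟨Lam.msubst_triv M₁ (fun z hz => h z (by simp [fv, hz])),
      Lam.msubst_triv M₂ (fun z hz => h z (by simp [fv, hz]))⟩

lemma Lam.subst_not_free : ∀ (M : Lam) {x : ℕ} {V : Lam}, x ∉ fv M → subst M x V = M
  | .var y, x, V, h => by
    have hyx : ¬ y = x := by intro hc; exact h (by simp [fv, hc])
    simp [subst, hyx]
  | .lam y M, x, V, h => by
    by_cases hyx : y = x
    · simp [subst, hyx]
    · simp only [fv, Finset.mem_sdiff, Finset.mem_singleton, not_and, not_not] at h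
      simp only [subst, hyx, if_false, Lam.lam.injEq, true_and]
      exact Lam.subst_not_free M (fun hc => hyx (h hc).symm)
  | .app M₁ M₂, x, V, h => by
    simp only [fv, Finset.mem_union, not_or] at h
    simp [subst, Lam.subst_not_free M₁ h.1, Lam.subst_not_free M₂ h.2]

lemma Lam.fv_msubst : ∀ (M : Lam) {σ : ℕ → Option Lam},
    (∀ y t, σ y = some t → fv t = ∅) →
    ∀ z ∈ fv (msubst M σ), z ∈ fv M ∧ σ z = none
  | .var y, σ, H, z, hz => by
    simp only [msubst] at hz
    cases hσ : σ y with
    | none => simp only [hσ, Option.getD_none, fv, Finset.mem_singleton] at hz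
              exact ⟨by simp [fv, hz], hz ▸ hσ⟩
    | some t => rw [hσ] at hz; simp [H y t hσ] at hz
  | .lam y M, σ, H, z, hz => by
    simp only [msubst, fv, Finset.mem_sdiff, Finset.mem_singleton] at hz
    have H' : ∀ w t, (fun w => if w = y then none else σ w) w = some t → fv t = ∅ := by
      intro w t hw
      by_cases hwy : w = y
      · simp [hwy] at hw
      · simp only [hwy, if_false] at hw; exact H w t hw
    obtain ⟨h1, h2⟩ := Lam.fv_msubst M H' z hz.1
    simp only [hz.2, if_false] at h2
    exact ⟨by simp [fv, h1, hz.2], h2⟩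
  | .app M₁ M₂, σ, H, z, hz => by
    simp only [msubst, fv, Finset.mem_union] at hz ⊢
    rcases hz with hz | hz
    · obtain ⟨h1, h2⟩ := Lam.fv_msubst M₁ H z hz; exact ⟨Or.inl h1, h2⟩
    · obtain ⟨h1, h2⟩ := Lam.fv_msubst M₂ H z hz; exact ⟨Or.inr h1, h2⟩

lemma Lam.subst_msubst : ∀ (M : Lam) {σ : ℕ → Option Lam} {x : ℕ} {V : Lam},
    σ x = none → (∀ y t, σ y = some t → fv t = ∅) →
    subst (msubst M σ) x V = msubst M (fun z => if z = x then some V else σ z)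
  | .var y, σ, x, V, hx, H => by
    by_cases hyx : y = x
    · subst hyx; simp [msubst, hx, subst]
    · cases hσ : σ y with
      | none => simp [msubst, hσ, subst, hyx]
      | some t =>
          simp only [msubst, hσ, Option.getD_some, hyx, if_false]
          exact Lam.subst_not_free t (by simp [H y t hσ])
  | .lam y M, σ, x, V, hx, H => by
    by_cases hyx : y = x
    · subst hyx
      simp only [msubst, subst, if_true, Lam.lam.injEq, true_and]
      exact Lam.msubst_congr M (fun z hz => by by_cases hzy : z = y <;> simp [hzy])
    · simp only [msubst, subst, hyx, if_false, Lam.lam.injEq, true_and]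
      have hx' : (fun z => if z = y then none else σ z) x = none := by
        simp [(by exact fun hc => hyx hc.symm : ¬ x = y), hx]
      have H' : ∀ w t, (fun z => if z = y then none else σ z) w = some t → fv t = ∅ := by
        intro w t hw
        by_cases hwy : w = y
        · simp [hwy] at hw
        · simp only [hwy, if_false] at hw; exact H w t hw
      rw [Lam.subst_msubst M hx' H']
      refine Lam.msubst_congr M (fun z _ => ?_)
      by_cases hzy : z = y
      · simp [hzy, hyx]
      · by_cases hzx : z = x
        · simp [hzy, hzx, Ne.symm hyx]
        · simp [hzy, hzx]
  | .app M₁ M₂, σ, x, V, hx, H => by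
    simp [msubst, subst, Lam.subst_msubst M₁ hx H, Lam.subst_msubst M₂ hx H]

end Aux

section Aux2
open Lam PTerm

@[simp] lemma psubst_var (σ : ℕ → Option PTerm) (y : ℕ) :
    PTerm.psubst σ (.var y) = (σ y).getD (.var y) := by rw [PTerm.psubst]

@[simp] lemma psubst_app (σ : ℕ → Option PTerm) (u v : PTerm) :
    PTerm.psubst σ (.app u v) = .app (PTerm.psubst σ u) (PTerm.psubst σ v) := by
  rw [PTerm.psubst]

@[simp] lemma psubst_con (σ : ℕ → Option PTerm) (x : ℕ) (M : Lam) (ts : List PTerm) :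
    PTerm.psubst σ (.con x M ts) = .con x M (ts.map (PTerm.psubst σ)) := by
  rw [PTerm.psubst]; simp [List.attach_map_val]

@[simp] lemma readback_var (y : ℕ) : readback (.var y) = .var y := by rw [readback]

@[simp] lemma readback_app (u v : PTerm) :
    readback (.app u v) = .app (readback u) (readback v) := by rw [readback]

@[simp] lemma readback_con (x : ℕ) (M : Lam) (ts : List PTerm) :
    readback (.con x M ts) =
      Lam.msubst (.lam x M) (Lam.substOf (Lam.fvList (.lam x M)) (ts.map readback)) := by
  rw [readback]; simp [List.attach_map_val]

lemma readback_con' (x : ℕ) (M : Lam) (ts : List PTerm) :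
    readback (.con x M ts) =
      Lam.lam x (Lam.msubst M (fun z => if z = x then none
        else Lam.substOf (Lam.fvList (.lam x M)) (ts.map readback) z)) := by
  rw [readback_con]; rfl

lemma conterm_no_step : ∀ {t u : PTerm}, PhiStep t u → PTerm.IsConTerm t → False := by
  intro t u h
  induction h with
  | root _ _ _ => intro hc; cases hc
  | appL _ _ => intro hc; cases hc
  | appR _ _ => intro hc; cases hc
  | conArg _ ih =>
      intro hc
      cases hc with
      | con h' => exact ih (h' _ (by simp))

lemma x_not_mem_fvList (x : ℕ) (M : Lam) : x ∉ Lam.fvList (.lam x M) := by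
  simp [Lam.fvList, Finset.mem_sort, Lam.fv]

lemma mem_fvList_iff {z x : ℕ} {M : Lam} :
    z ∈ Lam.fvList (.lam x M) ↔ (z ∈ Lam.fv M ∧ z ≠ x) := by
  simp [Lam.fvList, Finset.mem_sort, Lam.fv]

lemma readback_conterm : ∀ {t : PTerm}, PTerm.IsConTerm t → PTerm.WF t →
    (∃ x B, readback t = Lam.lam x B) ∧ Lam.Closed (readback t) := by
  intro t h
  induction h with
  | @con x M ts hts ih =>
    intro hwf
    have hlen : ts.length = (Lam.fvList (.lam x M)).length := by
      cases hwf with | con h1 _ => exact h1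
    have hargsWF : ∀ t ∈ ts, PTerm.WF t := by
      cases hwf with | con _ h2 => exact h2
    constructor
    · exact ⟨x, _, readback_con' x M ts⟩
    · rw [readback_con]
      have H : ∀ y u, Lam.substOf (Lam.fvList (.lam x M)) (ts.map readback) y = some u →
          Lam.fv u = ∅ := by
        intro y u hy
        have hmem : u ∈ ts.map readback := lookup_zip_some_mem hy
        obtain ⟨t', ht', rfl⟩ := List.mem_map.mp hmem
        exact (ih t' ht' (hargsWF t' ht')).2
      have key := Lam.fv_msubst (.lam x M) H
      rw [Lam.Closed, Finset.eq_empty_iff_forall_notMem]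
      intro z hz
      obtain ⟨h1, h2⟩ := key z hz
      have hzl : z ∈ Lam.fvList (.lam x M) := by simp [Lam.fvList, Finset.mem_sort, h1]
      obtain ⟨u, _, hu⟩ := lookup_zip_mem (us := ts.map readback) hzl
        (by simp [hlen])
      rw [Lam.substOf] at h2
      rw [h2] at hu; exact absurd hu (by simp)

lemma readback_psubst (σP : ℕ → Option PTerm) : ∀ P : Lam,
    readback (PTerm.psubst σP (transPhi P)) =
      Lam.msubst P (fun y => (σP y).map readback)
  | .var y => by
    simp only [transPhi, psubst_var, Lam.msubst]
    cases σP y <;> simp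
  | .app P₁ P₂ => by
    simp [transPhi, readback_psubst σP P₁, readback_psubst σP P₂, Lam.msubst]
  | .lam y P' => by
    simp only [transPhi, psubst_con, List.map_map]
    rw [readback_con]
    simp only [Lam.msubst, Lam.lam.injEq, true_and, List.map_map]
    refine Lam.msubst_congr P' (fun z hz => ?_)
    by_cases hzy : z = y
    · simp [hzy, Lam.substOf]
    · have hzl : z ∈ Lam.fvList (.lam y P') := mem_fvList_iff.mpr ⟨hz, hzy⟩
      have hself := lookup_zip_self
        (g := fun a => readback (PTerm.psubst σP (transPhi (Lam.var a)))) hzl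
      simp only [Lam.substOf, hzy, if_false, List.map_map]
      rw [show (readback ∘ PTerm.psubst σP ∘ PTerm.var) =
        (fun a => readback (PTerm.psubst σP (transPhi (Lam.var a)))) from rfl, hself]
      simp only [transPhi, psubst_var]
      cases σP z <;> simp

end Aux2

section Aux3
open Lam PTerm

lemma psubst_trans_canonical (σP : ℕ → Option PTerm) : ∀ P : Lam,
    (∀ y ∈ Lam.fv P, ∃ t, σP y = some t ∧ PTerm.IsConTerm t ∧ PTerm.WF t) →
    PTerm.Canonical (PTerm.psubst σP (transPhi P)) ∧ PTerm.WF (PTerm.psubst σP (transPhi P))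
  | .var y, h => by
    obtain ⟨t, ht, hc, hw⟩ := h y (by simp [Lam.fv])
    simp only [transPhi, psubst_var, ht, Option.getD_some]
    exact ⟨PTerm.Canonical.con hc, hw⟩
  | .app P₁ P₂, h => by
    obtain ⟨hc₁, hw₁⟩ := psubst_trans_canonical σP P₁
      (fun y hy => h y (by simp [Lam.fv, hy]))
    obtain ⟨hc₂, hw₂⟩ := psubst_trans_canonical σP P₂
      (fun y hy => h y (by simp [Lam.fv, hy]))
    constructor <;> simp only [transPhi, psubst_app]
    · exact PTerm.Canonical.app hc₁ hc₂
    · exact PTerm.WF.app hw₁ hw₂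
  | .lam y P', h => by
    simp only [transPhi, psubst_con, List.map_map]
    have harg : ∀ z ∈ Lam.fvList (.lam y P'),
        ∃ t, σP z = some t ∧ PTerm.IsConTerm t ∧ PTerm.WF t := by
      intro z hzl
      exact h z (by simpa [Lam.fvList, Finset.mem_sort] using hzl)
    constructor
    · refine PTerm.Canonical.con (PTerm.IsConTerm.con ?_)
      intro t ht
      obtain ⟨z, hzl, rfl⟩ := List.mem_map.mp ht
      obtain ⟨t', ht', hc, _⟩ := harg z hzl
      simpa [transPhi, ht'] using hc
    · refine PTerm.WF.con (by simp) ?_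
      intro t ht
      obtain ⟨z, hzl, rfl⟩ := List.mem_map.mp ht
      obtain ⟨t', ht', _, hw⟩ := harg z hzl
      simpa [transPhi, ht'] using hw

lemma step_root_readback {x : ℕ} {M : Lam} {ts : List PTerm} {v : PTerm}
    (htsW : ∀ t ∈ ts, PTerm.IsConTerm t ∧ PTerm.WF t)
    (hv : PTerm.IsConTerm v) (hvW : PTerm.WF v)
    (hlen : ts.length = (Lam.fvList (.lam x M)).length) :
    readback (PTerm.psubst (PTerm.substOfP (Lam.fvList (.lam x M) ++ [x]) (ts ++ [v]))
        (transPhi M)) =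
      Lam.subst (Lam.msubst M (fun z => if z = x then none
          else Lam.substOf (Lam.fvList (.lam x M)) (ts.map readback) z)) x (readback v) := by
  rw [readback_psubst]
  have hcl : ∀ y t, (fun z => if z = x then none
      else Lam.substOf (Lam.fvList (.lam x M)) (ts.map readback) z) y = some t →
      Lam.fv t = ∅ := by
    intro y t hy
    by_cases hyx : y = x
    · simp [hyx] at hy
    · simp only [hyx, if_false] at hy
      obtain ⟨t', ht', rfl⟩ := List.mem_map.mp (lookup_zip_some_mem hy)
      exact (readback_conterm (htsW t' ht').1 (htsW t' ht').2).2
  rw [Lam.subst_msubst M (by simp) hcl]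
  refine Lam.msubst_congr M (fun z hz => ?_)
  by_cases hzx : z = x
  · subst hzx
    have hnot : z ∉ Lam.fvList (.lam z M) := x_not_mem_fvList z M
    rw [PTerm.substOfP]
    rw [lookup_zip_append_not_mem [z] [v] (by simp [hlen]) hnot]
    simp [lookup_cons'']
  · by_cases hzf : z ∈ Lam.fvList (.lam x M)
    · rw [PTerm.substOfP]
      rw [lookup_zip_append_mem [x] [v] (by simp [hlen]) hzf]
      simp only [hzx, if_false, Lam.substOf, lookup_zip_map readback z]
    · rw [PTerm.substOfP]
      rw [lookup_zip_append_not_mem [x] [v] (by simp [hlen]) hzf]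
      simp only [hzx, if_false, Lam.substOf]
      rw [lookup_zip_not_mem _ hzf]
      simp [lookup_cons'', hzx]

end Aux3

section Aux4
open Lam PTerm

lemma phi_to_cbv : ∀ {t u : PTerm}, PhiStep t u → PTerm.Canonical t → PTerm.WF t →
    (PTerm.Canonical u ∧ PTerm.WF u) ∧ Lam.CbvStep (readback t) (readback u) := by
  intro t u h
  induction h with
  | @root x M ts v hts hv hlen =>
    intro hc hw
    have hc1 : PTerm.Canonical (.con x M ts) ∧ PTerm.Canonical v := by
      cases hc with
      | con h => cases h
      | app h1 h2 => exact ⟨h1, h2⟩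
    have hw1 : PTerm.WF (.con x M ts) ∧ PTerm.WF v := by
      cases hw with | app h1 h2 => exact ⟨h1, h2⟩
    have hwargs : ∀ t ∈ ts, PTerm.WF t := by
      cases hw1.1 with | con _ h2 => exact h2
    have htsW : ∀ t ∈ ts, PTerm.IsConTerm t ∧ PTerm.WF t :=
      fun t ht => ⟨hts t ht, hwargs t ht⟩
    constructor
    · refine psubst_trans_canonical _ M (fun y hy => ?_)
      rw [PTerm.substOfP]
      by_cases hyx : y = x
      · subst hyx
        rw [lookup_zip_append_not_mem [y] [v] (by simp [hlen]) (x_not_mem_fvList y M)]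
        exact ⟨v, by simp [lookup_cons''], hv, hw1.2⟩
      · have hyf : y ∈ Lam.fvList (.lam x M) := mem_fvList_iff.mpr ⟨hy, hyx⟩
        rw [lookup_zip_append_mem [x] [v] (by simp [hlen]) hyf]
        obtain ⟨u', hu', heq⟩ := lookup_zip_mem hyf hlen.symm
        exact ⟨u', heq, hts u' hu', hwargs u' hu'⟩
    · rw [readback_app, readback_con', step_root_readback htsW hv hw1.2 hlen]
      obtain ⟨x', B', hEq⟩ := (readback_conterm hv hw1.2).1
      have hval : Lam.IsValue (readback v) := by rw [hEq]; trivial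
      exact Lam.CbvStep.beta hval
  | @appL u u' v hstep ih =>
    intro hc hw
    have hc1 : PTerm.Canonical u ∧ PTerm.Canonical v := by
      cases hc with
      | con h => cases h
      | app h1 h2 => exact ⟨h1, h2⟩
    have hw1 : PTerm.WF u ∧ PTerm.WF v := by
      cases hw with | app h1 h2 => exact ⟨h1, h2⟩
    obtain ⟨⟨hcu, hwu⟩, hstepL⟩ := ih hc1.1 hw1.1
    exact ⟨⟨PTerm.Canonical.app hcu hc1.2, PTerm.WF.app hwu hw1.2⟩,
      by rw [readback_app, readback_app]; exact Lam.CbvStep.appL hstepL⟩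
  | @appR u v v' hstep ih =>
    intro hc hw
    have hc1 : PTerm.Canonical u ∧ PTerm.Canonical v := by
      cases hc with
      | con h => cases h
      | app h1 h2 => exact ⟨h1, h2⟩
    have hw1 : PTerm.WF u ∧ PTerm.WF v := by
      cases hw with | app h1 h2 => exact ⟨h1, h2⟩
    obtain ⟨⟨hcv, hwv⟩, hstepR⟩ := ih hc1.2 hw1.2
    exact ⟨⟨PTerm.Canonical.app hc1.1 hcv, PTerm.WF.app hw1.1 hwv⟩,
      by rw [readback_app, readback_app]; exact Lam.CbvStep.appR hstepR⟩
  | @conArg x M ts₁ t t' ts₂ hstep ih =>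
    intro hc _
    exfalso
    cases hc with
    | con h =>
      cases h with
      | con hargs => exact conterm_no_step hstep (hargs t (by simp))

lemma cbv_to_phi : ∀ (t : PTerm) (N : Lam), Lam.CbvStep (readback t) N →
    PTerm.Canonical t → PTerm.WF t → ∃ u, PhiStep t u ∧ readback u = N
  | .var y, N => by
    intro _ hc _
    cases hc with | con h => cases h
  | .con x M ts, N => by
    intro hstep _ _
    rw [readback_con'] at hstep
    cases hstep
  | .app t₁ t₂, N => by
    have ih₁ := cbv_to_phi t₁
    have ih₂ := cbv_to_phi t₂
    intro hstep hc hw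
    have hc1 : PTerm.Canonical t₁ ∧ PTerm.Canonical t₂ := by
      cases hc with
      | con h => cases h
      | app h1 h2 => exact ⟨h1, h2⟩
    have hw1 : PTerm.WF t₁ ∧ PTerm.WF t₂ := by
      cases hw with | app h1 h2 => exact ⟨h1, h2⟩
    rw [readback_app] at hstep
    generalize hA : readback t₁ = A at hstep
    generalize hB : readback t₂ = B at hstep
    cases hstep with
    | @beta x M V hval =>
      -- A = lam x M, B = V
      match t₁, hc1.1 with
      | .con x' M' ts, hct₁ =>
        rw [readback_con'] at hA
        injection hA with h1 h2
        subst h1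
        have hargs : ∀ t ∈ ts, PTerm.IsConTerm t := by
          cases hct₁ with
          | con h => cases h with | con hargs => exact hargs
        have hlen : ts.length = (Lam.fvList (.lam x' M')).length := by
          cases hw1.1 with | con hl _ => exact hl
        have hwargs : ∀ t ∈ ts, PTerm.WF t := by
          cases hw1.1 with | con _ h2' => exact h2'
        have hvcon : PTerm.IsConTerm t₂ := by
          match t₂, hc1.2 with
          | .con a b c, hct₂ =>
            cases hct₂ with | con h => exact h
          | .var a, hct₂ => cases hct₂ with | con h => cases h
          | .app a b, hct₂ =>
            exfalso
            rw [readback_app] at hB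
            rw [← hB] at hval
            exact hval
        refine ⟨_, PhiStep.root hargs hvcon hlen, ?_⟩
        rw [step_root_readback (fun t ht => ⟨hargs t ht, hwargs t ht⟩) hvcon hw1.2 hlen]
        rw [hB, h2]
      | .var y, hct₁ => cases hct₁ with | con h => cases h
      | .app a b, hct₁ =>
        exfalso
        rw [readback_app] at hA
        exact Lam.noConfusion hA
    | @appL _ N₁ _ h =>
      rw [← hA] at h
      obtain ⟨u₁, hu₁, hru₁⟩ := ih₁ _ h hc1.1 hw1.1
      exact ⟨.app u₁ t₂, PhiStep.appL hu₁, by rw [readback_app, hru₁, hB]⟩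
    | @appR _ N₂ _ h =>
      rw [← hB] at h
      obtain ⟨u₂, hu₂, hru₂⟩ := ih₂ _ h hc1.2 hw1.2
      exact ⟨.app t₁ u₂, PhiStep.appR hu₂, by rw [readback_app, hru₂, hA]⟩

end Aux4

section Aux5
open Lam PTerm

lemma closed_app {M N : Lam} (h : Lam.Closed (.app M N)) : Lam.Closed M ∧ Lam.Closed N := by
  rw [Lam.Closed, Lam.fv, Finset.union_eq_empty] at h
  exact h

lemma fvList_closed_lam {x : ℕ} {M : Lam} (h : Lam.Closed (.lam x M)) :
    Lam.fvList (.lam x M) = [] := by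
  rw [Lam.fvList, h]
  exact Finset.sort_empty _

lemma transPhi_good : ∀ M : Lam, Lam.Closed M →
    PTerm.Canonical (transPhi M) ∧ PTerm.WF (transPhi M)
  | .var y, h => by simp [Lam.Closed, Lam.fv] at h
  | .lam x M, h => by
    rw [transPhi, fvList_closed_lam h]
    exact ⟨PTerm.Canonical.con (PTerm.IsConTerm.con (by simp)),
      PTerm.WF.con (by rw [fvList_closed_lam h]; simp) (by simp)⟩
  | .app M₁ M₂, h => by
    obtain ⟨h1, h2⟩ := closed_app h
    obtain ⟨c1, w1⟩ := transPhi_good M₁ h1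
    obtain ⟨c2, w2⟩ := transPhi_good M₂ h2
    exact ⟨PTerm.Canonical.app c1 c2, PTerm.WF.app w1 w2⟩

lemma readback_transPhi : ∀ M : Lam, Lam.Closed M → readback (transPhi M) = M
  | .var y, h => by simp [Lam.Closed, Lam.fv] at h
  | .lam x M, h => by
    rw [transPhi, fvList_closed_lam h]
    rw [readback_con', fvList_closed_lam h]
    simp only [Lam.lam.injEq, true_and]
    refine Lam.msubst_triv M (fun y hy => ?_)
    by_cases hyx : y = x
    · simp [hyx]
    · simp [hyx, Lam.substOf]
  | .app M₁ M₂, h => by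
    obtain ⟨h1, h2⟩ := closed_app h
    rw [transPhi, readback_app, readback_transPhi M₁ h1, readback_transPhi M₂ h2]

lemma phiNormal_iff {t : PTerm} (hc : PTerm.Canonical t) (hw : PTerm.WF t) :
    PhiNormal t ↔ Lam.CbvNormal (readback t) := by
  constructor
  · intro h ⟨N, hN⟩
    obtain ⟨u, hu, _⟩ := cbv_to_phi t N hN hc hw
    exact h ⟨u, hu⟩
  · intro h ⟨u, hu⟩
    exact h ⟨readback u, (phi_to_cbv hu hc hw).2⟩

lemma sim_fwd : ∀ (n : ℕ) (t : PTerm) (N : Lam), PTerm.Canonical t → PTerm.WF t →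
    NSteps Lam.CbvStep n (readback t) N →
    ∃ u, NSteps PhiStep n t u ∧ readback u = N ∧ PTerm.Canonical u ∧ PTerm.WF u
  | 0, t, N, hc, hw, h => ⟨t, rfl, h.symm ▸ rfl, hc, hw⟩
  | n + 1, t, N, hc, hw, h => by
    obtain ⟨N₁, h1, h2⟩ := h
    obtain ⟨u₁, hu₁, hru₁⟩ := cbv_to_phi t N₁ h1 hc hw
    obtain ⟨⟨hcu₁, hwu₁⟩, _⟩ := phi_to_cbv hu₁ hc hw
    obtain ⟨u, hsteps, hr, hcu, hwu⟩ := sim_fwd n u₁ N hcu₁ hwu₁ (by rw [hru₁]; exact h2)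
    exact ⟨u, ⟨u₁, hu₁, hsteps⟩, hr, hcu, hwu⟩

lemma sim_bwd : ∀ (n : ℕ) (t u : PTerm), PTerm.Canonical t → PTerm.WF t →
    NSteps PhiStep n t u →
    NSteps Lam.CbvStep n (readback t) (readback u) ∧ PTerm.Canonical u ∧ PTerm.WF u
  | 0, t, u, hc, hw, h => by
    cases h
    exact ⟨rfl, hc, hw⟩
  | n + 1, t, u, hc, hw, h => by
    obtain ⟨t₁, h1, h2⟩ := h
    obtain ⟨⟨hc₁, hw₁⟩, hstep⟩ := phi_to_cbv h1 hc hw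
    obtain ⟨hsteps, hcu, hwu⟩ := sim_bwd n t₁ u hc₁ hw₁ h2
    exact ⟨⟨readback t₁, hstep, hsteps⟩, hcu, hwu⟩

end Aux5

/-- Term Reducibility (call-by-value): for every closed λ-term M, M →v^n N with N
normal iff ⟨M⟩ rewrites in exactly n Φ-steps to a Φ-normal form t with ⟦t⟧ = N. -/
theorem term_reducibility (M N : Lam) (n : ℕ) (hM : Lam.Closed M) :
    (NSteps Lam.CbvStep n M N ∧ Lam.CbvNormal N) ↔
    (∃ t : PTerm, NSteps PhiStep n (transPhi M) t ∧ PhiNormal t ∧ readback t = N) := by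
  obtain ⟨hcM, hwM⟩ := transPhi_good M hM
  have hrM := readback_transPhi M hM
  constructor
  · rintro ⟨hsteps, hnorm⟩
    obtain ⟨t, hts, hrt, hct, hwt⟩ := sim_fwd n (transPhi M) N hcM hwM (by rw [hrM]; exact hsteps)
    exact ⟨t, hts, (phiNormal_iff hct hwt).mpr (by rw [hrt]; exact hnorm), hrt⟩
  · rintro ⟨t, hts, hnorm, hrt⟩
    obtain ⟨hsteps, hct, hwt⟩ := sim_bwd n (transPhi M) t hcM hwM hts
    rw [hrM, hrt] at hsteps
    refine ⟨hsteps, ?_⟩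
    rw [← hrt]
    exact (phiNormal_iff hct hwt).mp hnorm
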